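/- Under gradient flow over the hierarchical tensor factorization objective, let ν ∈ int(T) and r ∈ [R_ν]. If there exists a time t_0 ≥ 0 at which w(t_0) = 0 for all w ∈ LC(ν,r), then w(t) = 0 for all w ∈ LC(ν,r) and all t ≥ 0, i.e., the weight vectors of the (ν,r)'th local component are identically zero through time. -/

import Mathlib

namespace HTF

/-- Rooted tree whose leaves are labeled by elements of `Fin N`. -/
inductive MTree (N : ℕ) : Type
  | leaf : Fin N → MTree N
  | node : List (MTree N) → MTree N

noncomputable instance {N : ℕ} : DecidableEq (MTree N) := fun _ _ => Classical.dec _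

namespace MTree

variable {N : ℕ}

/-- The list of leaf labels of the tree. -/
def leafList : MTree N → List (Fin N)
  | .leaf i => [i]
  | .node ts => ts.attach.flatMap fun t => t.1.leafList
decreasing_by simp only [MTree.node.sizeOf_spec]; have := List.sizeOf_lt_of_mem t.2; omega

/-- The label of a node: set of leaf indices appearing in its subtree. -/
def label (t : MTree N) : Finset (Fin N) := t.leafList.toFinset

/-- All nodes (subtrees) of the tree. -/
def nodes : MTree N → List (MTree N)
  | .leaf i => [.leaf i]
  | .node ts => .node ts :: ts.attach.flatMap fun t => t.1.nodes
decreasing_by simp only [MTree.node.sizeOf_spec]; have := List.sizeOf_lt_of_mem t.2; omega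

/-- The children of a node. -/
def children : MTree N → List (MTree N)
  | .leaf _ => []
  | .node ts => ts

/-- Interior (non-leaf) node. -/
def IsInterior : MTree N → Prop
  | .leaf _ => False
  | .node _ => True

/-- Every non-leaf node has at least one child. -/
def Branching : MTree N → Prop
  | .leaf _ => True
  | .node ts => ts ≠ [] ∧ ∀ t ∈ ts.attach, Branching t.1
decreasing_by simp only [MTree.node.sizeOf_spec]; have := List.sizeOf_lt_of_mem t.2; omega

/-- A valid mode tree over `[N]`: it has exactly `N` leaves, labeled `{1},...,{N}`
(each index appearing exactly once), and interior nodes have children. -/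
def Valid (t : MTree N) : Prop :=
  t.leafList.Nodup ∧ (∀ i : Fin N, i ∈ t.leafList) ∧ t.Branching

/-- The parent of node `ν` in the tree (first argument), if it exists. -/
noncomputable def parentIn : MTree N → MTree N → Option (MTree N)
  | .leaf _, _ => none
  | .node ts, ν =>
      if ν ∈ ts then some (.node ts)
      else ts.attach.findSome? fun t => parentIn t.1 ν
termination_by T _ => sizeOf T
decreasing_by simp only [MTree.node.sizeOf_spec]; have := List.sizeOf_lt_of_mem t.2; omega

end MTree

open MTree

variable {N : ℕ} (D : Fin N → ℕ)

/-- Full index set of an order-`N` tensor with mode dimensions `D`. -/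
abbrev Idx : Type := ∀ n, Fin (D n)

/-- The intermediate tensors `W^(ν,r)` of a hierarchical tensor factorization with
local-component numbers `R` and weight matrices `W` (columns indexed by `ℕ`).
An order-`|label ν|` tensor is represented as a function of a full index tuple that
only depends on the coordinates in `label ν`; with this representation, the tensor
product of tensors over disjoint mode sets is pointwise multiplication and the mode
permutation `π_ν` is the identity. -/
noncomputable def interm (R : MTree N → ℕ) (W : ∀ ν : MTree N, Fin (R ν) → ℕ → ℝ) :
    MTree N → ℕ → Idx D → ℝ
  | .leaf i, r => fun x =>
      if h : R (.leaf i) = D i then W (.leaf i) (Fin.cast h.symm (x i)) r else 0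
  | .node ts, r => fun x =>
      ∑ r' : Fin (R (.node ts)),
        W (.node ts) r' r * (ts.attach.map fun t => interm R W t.1 (r' : ℕ) x).prod
decreasing_by simp only [MTree.node.sizeOf_spec]; have := List.sizeOf_lt_of_mem t.2; omega

/-- The end tensor `W_H` of the hierarchical tensor factorization with mode tree `T`. -/
noncomputable def endT (R : MTree N → ℕ) (W : ∀ ν : MTree N, Fin (R ν) → ℕ → ℝ)
    (T : MTree N) : Idx D → ℝ :=
  interm D R W T 0

/-- Entry `(i, j)` of the weight matrix at node `ν` (zero outside the row range). -/
noncomputable def went (R : MTree N → ℕ) (W : ∀ ν : MTree N, Fin (R ν) → ℕ → ℝ)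
    (ν : MTree N) (i j : ℕ) : ℝ :=
  if h : i < R ν then W ν ⟨i, h⟩ j else 0

/-- `R_{Pa(ν)}` : the number of local components at the parent of `ν` in `T`
(`1` if `ν` is the root). -/
noncomputable def Rpar (R : MTree N → ℕ) (T ν : MTree N) : ℕ :=
  if ν = T then 1 else ((parentIn T ν).map R).getD 0

/-- Replace the weight matrix at node `μ` by `A`, keeping all other weight matrices. -/
noncomputable def replace (R : MTree N → ℕ) (W : ∀ ν : MTree N, Fin (R ν) → ℕ → ℝ)
    (μ : MTree N) (A : Fin (R μ) → ℕ → ℝ) : ∀ ν : MTree N, Fin (R ν) → ℕ → ℝ :=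
  fun ν => if h : ν = μ then fun i j => A (Fin.cast (congrArg R h) i) j else W ν

/-- Frobenius (Euclidean) inner product of order-`N` tensors. -/
noncomputable def tinner (A B : Idx D → ℝ) : ℝ := ∑ x, A x * B x

/-- Frobenius norm of an order-`N` tensor. -/
noncomputable def tnorm (A : Idx D → ℝ) : ℝ := Real.sqrt (∑ x, (A x) ^ 2)

/-- Frobenius norm of an order-`|s|` tensor represented as a function of a full index
tuple depending only on the coordinates in `s` (so that the sum over the full index
set over-counts each entry `∏_{n ∉ s} D n` times). -/
noncomputable def rnorm (s : Finset (Fin N)) (A : Idx D → ℝ) : ℝ :=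
  Real.sqrt ((∑ x, (A x) ^ 2) / ∏ n ∈ sᶜ, (D n : ℝ))

/-- Squared norm of the `r`'th column of the weight matrix at node `c`. -/
noncomputable def colSq (R : MTree N → ℕ) (W : ∀ ν : MTree N, Fin (R ν) → ℕ → ℝ)
    (c : MTree N) (r : ℕ) : ℝ :=
  ∑ i : Fin (R c), (W c i r) ^ 2

/-- Squared norm of the `r`'th row of the weight matrix at node `ν` of `T`. -/
noncomputable def rowSq (R : MTree N → ℕ) (W : ∀ ν : MTree N, Fin (R ν) → ℕ → ℝ)
    (T ν : MTree N) (r : ℕ) : ℝ :=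
  ∑ j : Fin (Rpar R T ν), (went R W ν r (j : ℕ)) ^ 2

/-- `σ^(ν,r)` : the norm of the `(ν,r)`'th local component, i.e. the product of the
norms of the vectors in `LC(ν,r)` (the `r`'th row of `W^(ν)` together with the `r`'th
columns of the weight matrices of the children of `ν`). -/
noncomputable def sigmaLoc (R : MTree N → ℕ) (W : ∀ ν : MTree N, Fin (R ν) → ℕ → ℝ)
    (T ν : MTree N) (r : ℕ) : ℝ :=
  Real.sqrt (rowSq R W T ν r) * (ν.children.map fun c => Real.sqrt (colSq R W c r)).prod

/-- `PadR_r(W^(ν)_{r,:})` : the matrix whose `r`'th row is the `r`'th row of `W^(ν)`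
and whose other rows are zero. -/
noncomputable def padRow (R : MTree N → ℕ) (W : ∀ ν : MTree N, Fin (R ν) → ℕ → ℝ)
    (ν : MTree N) (r : ℕ) : Fin (R ν) → ℕ → ℝ :=
  fun i j => if (i : ℕ) = r then W ν i j else 0

/-- `PadC_r(W^(c)_{:,r})` : the matrix whose `r`'th column is the `r`'th column of
`W^(c)` and whose other columns are zero. -/
noncomputable def padCol (R : MTree N → ℕ) (W : ∀ ν : MTree N, Fin (R ν) → ℕ → ℝ)
    (c : MTree N) (r : ℕ) : Fin (R c) → ℕ → ℝ :=
  fun i j => if j = r then W c i r else 0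

/-- `Ĉ^(ν,r)` : the end tensor obtained by normalizing the `r`'th local component at
`ν` and setting all other local components at `ν` to zero, i.e. the end tensor computed
with `W^(ν)` replaced by `σ^{-1} · PadR_r(W^(ν)_{r,:})` (and `0` if `σ^(ν,r) = 0`). -/
noncomputable def hatC (R : MTree N → ℕ) (W : ∀ ν : MTree N, Fin (R ν) → ℕ → ℝ)
    (T ν : MTree N) (r : ℕ) : Idx D → ℝ :=
  if sigmaLoc R W T ν r = 0 then 0
  else endT D R (replace R W ν fun i j =>
    if (i : ℕ) = r then (sigmaLoc R W T ν r)⁻¹ * W ν i j else 0) T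

/-- The objective `φ_H = L_H ∘ (end tensor)`. -/
noncomputable def obj (L : (Idx D → ℝ) → ℝ) (R : MTree N → ℕ) (T : MTree N)
    (W : ∀ ν : MTree N, Fin (R ν) → ℕ → ℝ) : ℝ :=
  L (endT D R W T)

/-- Update the single entry `(i, j)` of the weight matrix at node `μ` to the value `s`. -/
noncomputable def upd (R : MTree N → ℕ) (W : ∀ ν : MTree N, Fin (R ν) → ℕ → ℝ)
    (μ : MTree N) (i j : ℕ) (s : ℝ) : ∀ ν : MTree N, Fin (R ν) → ℕ → ℝ :=
  fun ν i' j' => if ν = μ ∧ (i' : ℕ) = i ∧ j' = j then s else W ν i' j'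

/-- `∂φ_H/∂W^(μ)_{i,j}` : the partial derivative of the objective with respect to the
`(i,j)` entry of the weight matrix at node `μ`, at the point `W`. -/
noncomputable def dObj (L : (Idx D → ℝ) → ℝ) (R : MTree N → ℕ) (T : MTree N)
    (W : ∀ ν : MTree N, Fin (R ν) → ℕ → ℝ) (μ : MTree N) (i j : ℕ) : ℝ :=
  deriv (fun s : ℝ => obj D L R T (upd R W μ i j s)) (went R W μ i j)

/-- `∇L(A)` : the gradient of a loss over tensors, entrywise. -/
noncomputable def tgrad (L : (Idx D → ℝ) → ℝ) (A : Idx D → ℝ) : Idx D → ℝ :=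
  fun x => deriv (fun s : ℝ => L (Function.update A x s)) (A x)

/-- Local smoothness of the loss: its gradient is Lipschitz on compact sets. -/
def LocSmooth (L : (Idx D → ℝ) → ℝ) : Prop :=
  ∀ K : Set (Idx D → ℝ), IsCompact K → ∃ β : NNReal, LipschitzOnWith β (tgrad D L) K

/-- Gradient flow over the objective: each entry of each weight matrix moves against
its partial derivative. -/
def GradFlow (L : (Idx D → ℝ) → ℝ) (R : MTree N → ℕ) (T : MTree N)
    (Wt : ℝ → ∀ ν : MTree N, Fin (R ν) → ℕ → ℝ) : Prop :=
  ∀ (ν : MTree N) (i : Fin (R ν)) (j : ℕ) (t : ℝ), 0 ≤ t →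
    HasDerivAt (fun s : ℝ => Wt s ν i j) (- dObj D L R T (Wt t) ν (i : ℕ) j) t

/-- The matricization of an order-`N` tensor according to the index set `I` : the
matrix whose rows are indexed by the modes in `I` and whose columns are indexed by the
remaining modes. -/
noncomputable def matricize (I : Finset (Fin N)) (A : Idx D → ℝ) :
    Matrix (∀ i : {n // n ∈ I}, Fin (D i)) (∀ j : {n // n ∉ I}, Fin (D j)) ℝ :=
  fun ρ κ => A fun n => if h : n ∈ I then ρ ⟨n, h⟩ else κ ⟨n, h⟩

/-- Frobenius norm of the weight matrix `W^(ν) ∈ ℝ^{R_ν × R_{Pa(ν)}}` at node `ν` of `T`. -/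
noncomputable def wFro (R : MTree N → ℕ) (W : ∀ ν : MTree N, Fin (R ν) → ℕ → ℝ)
    (T ν : MTree N) : ℝ :=
  Real.sqrt (∑ i : Fin (R ν), ∑ j : Fin (Rpar R T ν), (W ν i (j : ℕ)) ^ 2)

/-- The weights obtained by pruning the `(ν,r)`'th local component: the `r`'th row of
`W^(ν)` and the `r`'th column of `W^(c)` for every child `c` of `ν` are set to zero. -/
noncomputable def pruneLC (R : MTree N → ℕ) (W : ∀ ν : MTree N, Fin (R ν) → ℕ → ℝ)
    (ν : MTree N) (r : ℕ) : ∀ μ : MTree N, Fin (R μ) → ℕ → ℝ :=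
  fun μ i j =>
    if μ = ν ∧ (i : ℕ) = r then 0
    else if μ ∈ ν.children ∧ j = r then 0
    else W μ i j

set_option linter.dupNamespace false
namespace MTree

variable {N : ℕ}

theorem mem_nodes_self (t : MTree N) : t ∈ t.nodes := by
  cases t with
  | leaf i => simp [nodes]
  | node ts => simp [nodes]

theorem sizeOf_le_of_mem_nodes : ∀ (t u : MTree N), u ∈ t.nodes → sizeOf u ≤ sizeOf t
  | .leaf i, u, h => by
    rw [nodes] at h; rw [List.mem_singleton] at h; subst h; exact le_refl _
  | .node ts, u, h => by
    rw [nodes] at h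
    rcases List.mem_cons.1 h with h | h
    · subst h; exact le_refl _
    · obtain ⟨a, -, hcn⟩ := List.mem_flatMap.1 h
      have h1 := sizeOf_le_of_mem_nodes a.1 u hcn
      have h2 := List.sizeOf_lt_of_mem a.2
      simp only [MTree.node.sizeOf_spec]
      omega
termination_by t => sizeOf t
decreasing_by have := List.sizeOf_lt_of_mem a.2; (try simp only [MTree.node.sizeOf_spec] at *); omega

theorem eq_or_sizeOf_lt_of_mem_nodes {t u : MTree N} (h : u ∈ t.nodes) :
    u = t ∨ sizeOf u < sizeOf t := by
  cases t with
  | leaf i => rw [nodes] at h; rw [List.mem_singleton] at h; exact Or.inl h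
  | node ts =>
    rw [nodes] at h
    rcases List.mem_cons.1 h with h | h
    · exact Or.inl h
    · obtain ⟨a, -, hcn⟩ := List.mem_flatMap.1 h
      have h1 := sizeOf_le_of_mem_nodes a.1 u hcn
      have h2 := List.sizeOf_lt_of_mem a.2
      right; simp only [MTree.node.sizeOf_spec]; omega

theorem sizeOf_lt_of_mem_children {t u : MTree N} (h : u ∈ t.children) :
    sizeOf u < sizeOf t := by
  cases t with
  | leaf i => simp [children] at h
  | node ts =>
    have := List.sizeOf_lt_of_mem (show u ∈ ts from h)
    simp only [MTree.node.sizeOf_spec]; omega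

theorem mem_nodes_of_mem_children {t u : MTree N} (h : u ∈ t.children) : u ∈ t.nodes := by
  cases t with
  | leaf i => simp [children] at h
  | node ts =>
    rw [nodes]
    exact List.mem_cons.2 (Or.inr (List.mem_flatMap.2 ⟨⟨u, h⟩, List.mem_attach _ _, mem_nodes_self u⟩))

theorem mem_nodes_trans : ∀ (s : MTree N) {t u : MTree N}, u ∈ t.nodes → t ∈ s.nodes → u ∈ s.nodes
  | .leaf i, t, u, h1, h2 => by
    rw [nodes] at h2; rw [List.mem_singleton] at h2; subst h2; exact h1
  | .node ts, t, u, h1, h2 => by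
    rw [nodes] at h2 ⊢
    rcases List.mem_cons.1 h2 with h2 | h2
    · subst h2; rw [nodes] at h1; exact h1
    · obtain ⟨a, ha, hcn⟩ := List.mem_flatMap.1 h2
      exact List.mem_cons.2 (Or.inr (List.mem_flatMap.2 ⟨a, ha, mem_nodes_trans a.1 h1 hcn⟩))
termination_by s => sizeOf s
decreasing_by have := List.sizeOf_lt_of_mem a.2; (try simp only [MTree.node.sizeOf_spec] at *); omega

theorem leafList_subset : ∀ (t : MTree N) {u : MTree N}, u ∈ t.nodes → ∀ a ∈ u.leafList, a ∈ t.leafList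
  | .leaf i, u, h => by
    rw [nodes] at h; rw [List.mem_singleton] at h; subst h; exact fun a ha => ha
  | .node ts, u, h => by
    rw [nodes] at h
    rcases List.mem_cons.1 h with h | h
    · subst h; exact fun a ha => ha
    · obtain ⟨c, -, hcn⟩ := List.mem_flatMap.1 h
      intro a ha
      have := leafList_subset c.1 hcn a ha
      rw [leafList]
      exact List.mem_flatMap.2 ⟨c, List.mem_attach _ _, this⟩
termination_by t => sizeOf t
decreasing_by have := List.sizeOf_lt_of_mem c.2; (try simp only [MTree.node.sizeOf_spec] at *); omega

theorem branching_of_mem_nodes : ∀ (t : MTree N) {u : MTree N}, t.Branching → u ∈ t.nodes → u.Branching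
  | .leaf i, u, hb, h => by
    rw [nodes] at h; rw [List.mem_singleton] at h; subst h; exact hb
  | .node ts, u, hb, h => by
    rw [nodes] at h
    rcases List.mem_cons.1 h with h | h
    · subst h; exact hb
    · obtain ⟨c, -, hcn⟩ := List.mem_flatMap.1 h
      rw [Branching] at hb
      exact branching_of_mem_nodes c.1 (hb.2 c (List.mem_attach _ _)) hcn
termination_by t => sizeOf t
decreasing_by have := List.sizeOf_lt_of_mem c.2; (try simp only [MTree.node.sizeOf_spec] at *); omega

theorem leafList_ne_nil : ∀ (t : MTree N), t.Branching → t.leafList ≠ []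
  | .leaf i, hb => by simp [leafList]
  | .node ts, hb => by
    rw [Branching] at hb
    rw [leafList]
    obtain ⟨c, hc⟩ := List.exists_mem_of_ne_nil _ hb.1
    intro hnil
    have hsub : c.leafList ≠ [] := leafList_ne_nil c (hb.2 ⟨c, hc⟩ (List.mem_attach _ _))
    obtain ⟨a, ha⟩ := List.exists_mem_of_ne_nil _ hsub
    have : a ∈ ts.attach.flatMap fun t => t.1.leafList :=
      List.mem_flatMap.2 ⟨⟨c, hc⟩, List.mem_attach _ _, ha⟩
    rw [hnil] at this
    exact List.not_mem_nil this
termination_by t => sizeOf t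
decreasing_by have := List.sizeOf_lt_of_mem hc; (try simp only [MTree.node.sizeOf_spec] at *); omega

end MTree
namespace MTree

theorem findSome?_eq_some_of_unique {α β : Type*} {l : List α} {f : α → Option β} {b : β}
    (hex : ∃ a ∈ l, f a = some b) (huniq : ∀ a ∈ l, ∀ b', f a = some b' → b' = b) :
    l.findSome? f = some b := by
  induction l with
  | nil => simp at hex
  | cons a l ih =>
    cases hfa : f a with
    | some b' =>
      have : b' = b := huniq a List.mem_cons_self b' hfa
      subst this
      simp [List.findSome?_cons, hfa]
    | none =>
      simp only [List.findSome?_cons, hfa]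
      obtain ⟨a', ha', hfa'⟩ := hex
      rcases List.mem_cons.1 ha' with rfl | ha'
      · rw [hfa] at hfa'; exact absurd hfa' (by simp)
      · exact ih ⟨a', ha', hfa'⟩ (fun x hx => huniq x (List.mem_cons_of_mem _ hx))

variable {N : ℕ}

theorem child_leafList_nodup {ts : List (MTree N)}
    (hn : (MTree.node ts : MTree N).leafList.Nodup) {c : MTree N} (hc : c ∈ ts) :
    c.leafList.Nodup := by
  rw [leafList] at hn
  exact (List.nodup_flatMap.1 hn).1 ⟨c, hc⟩ (List.mem_attach _ _)

theorem children_disjoint {ts : List (MTree N)}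
    (hn : (MTree.node ts : MTree N).leafList.Nodup) {c c' : MTree N}
    (hc : c ∈ ts) (hc' : c' ∈ ts) (hne : c ≠ c') :
    c.leafList.Disjoint c'.leafList := by
  rw [leafList] at hn
  have hpw := (List.nodup_flatMap.1 hn).2
  have hsymm : Symmetric (fun a b : {x // x ∈ ts} => (a.1.leafList).Disjoint (b.1.leafList)) :=
    fun a b h => h.symm
  haveI : Std.Symm (Function.onFun List.Disjoint fun t : {x // x ∈ ts} => t.1.leafList) :=
    ⟨fun a b h => hsymm h⟩
  exact hpw.forall (List.mem_attach _ ⟨c, hc⟩) (List.mem_attach _ ⟨c', hc'⟩)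
    (fun h => hne (congrArg Subtype.val h))

theorem leafList_nodup_of_mem_nodes : ∀ (t : MTree N) {u : MTree N},
    t.leafList.Nodup → u ∈ t.nodes → u.leafList.Nodup
  | .leaf i, u, hn, h => by
    rw [nodes] at h; rw [List.mem_singleton] at h; subst h; exact hn
  | .node ts, u, hn, h => by
    rw [nodes] at h
    rcases List.mem_cons.1 h with h | h
    · subst h; exact hn
    · obtain ⟨c, -, hcn⟩ := List.mem_flatMap.1 h
      exact leafList_nodup_of_mem_nodes c.1 (child_leafList_nodup hn c.2) hcn
termination_by t => sizeOf t
decreasing_by have := List.sizeOf_lt_of_mem c.2; (try simp only [MTree.node.sizeOf_spec] at *); omega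

theorem unique_child_containing {ts : List (MTree N)}
    (hn : (MTree.node ts : MTree N).leafList.Nodup)
    (hb : (MTree.node ts : MTree N).Branching) {c c' u : MTree N}
    (hc : c ∈ ts) (hc' : c' ∈ ts) (hu : u ∈ c.nodes) (hu' : u ∈ c'.nodes) : c = c' := by
  by_contra hne
  have hdis := children_disjoint hn hc hc' hne
  rw [Branching] at hb
  have hub : u.Branching :=
    branching_of_mem_nodes c (hb.2 ⟨c, hc⟩ (List.mem_attach _ _)) hu
  obtain ⟨a, ha⟩ := List.exists_mem_of_ne_nil _ (leafList_ne_nil u hub)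
  exact hdis (leafList_subset c hu a ha) (leafList_subset c' hu' a ha)

theorem parentIn_sound : ∀ (t : MTree N) {νx p : MTree N},
    parentIn t νx = some p → p ∈ t.nodes ∧ νx ∈ p.children
  | .leaf i, νx, p, h => by rw [parentIn] at h; exact absurd h (by simp)
  | .node ts, νx, p, h => by
    rw [parentIn] at h
    split at h
    · have : MTree.node ts = p := Option.some.inj h
      subst this
      exact ⟨mem_nodes_self _, by rw [children]; assumption⟩
    · obtain ⟨a, ha, hsome⟩ := List.exists_of_findSome?_eq_some h
      have hrec := parentIn_sound a.1 hsome
      refine ⟨mem_nodes_trans _ hrec.1 ?_, hrec.2⟩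
      exact mem_nodes_of_mem_children (t := MTree.node ts) (by rw [children]; exact a.2)
termination_by t => sizeOf t
decreasing_by have := List.sizeOf_lt_of_mem a.2; (try simp only [MTree.node.sizeOf_spec] at *); omega

theorem parentIn_eq_of_mem_children : ∀ (t : MTree N), t.leafList.Nodup → t.Branching →
    ∀ {p νx : MTree N}, p ∈ t.nodes → νx ∈ p.children → parentIn t νx = some p
  | .leaf i, hn, hb, p, νx, hp, hνx => by
    rw [nodes] at hp; rw [List.mem_singleton] at hp; subst hp; simp [children] at hνx
  | .node ts, hn, hb, p, νx, hp, hνx => by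
    rw [nodes] at hp
    rw [parentIn]
    rcases List.mem_cons.1 hp with hp | hp
    · subst hp
      rw [if_pos (show νx ∈ ts by rw [children] at hνx; exact hνx)]
    · obtain ⟨c, -, hpc⟩ := List.mem_flatMap.1 hp
      have hbranch : (MTree.node ts : MTree N).Branching := hb
      rw [Branching] at hb
      have hcbr : c.1.Branching := hb.2 c (List.mem_attach _ _)
      have hcnd : c.1.leafList.Nodup := child_leafList_nodup hn c.2
      have hνnodes : νx ∈ c.1.nodes := mem_nodes_trans _ (mem_nodes_of_mem_children hνx) hpc
      have hνbr : νx.Branching := branching_of_mem_nodes c.1 hcbr hνnodes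
      have hnotin : νx ∉ ts := by
        intro hmem
        rcases eq_or_ne νx c.1 with heq | hne
        · have h1 : sizeOf νx < sizeOf p := sizeOf_lt_of_mem_children hνx
          have h2 : sizeOf p ≤ sizeOf c.1 := sizeOf_le_of_mem_nodes c.1 p hpc
          rw [heq] at h1; omega
        · have hdis := children_disjoint hn hmem c.2 hne
          obtain ⟨a, ha⟩ := List.exists_mem_of_ne_nil _ (leafList_ne_nil νx hνbr)
          exact hdis ha (leafList_subset c.1 hνnodes a ha)
      rw [if_neg hnotin]
      have hparc : parentIn c.1 νx = some p :=
        parentIn_eq_of_mem_children c.1 hcnd hcbr hpc hνx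
      apply findSome?_eq_some_of_unique
      · exact ⟨c, List.mem_attach _ _, hparc⟩
      · intro a _ p' hp'
        obtain ⟨hp'nodes, hν'⟩ := parentIn_sound a.1 hp'
        have hνnodes' : νx ∈ a.1.nodes := mem_nodes_trans _ (mem_nodes_of_mem_children hν') hp'nodes
        have hac : a.1 = c.1 := unique_child_containing hn hbranch a.2 c.2 hνnodes' hνnodes
        rw [hac] at hp'
        exact Option.some.inj (hp'.symm.trans hparc)
termination_by t => sizeOf t
decreasing_by have := List.sizeOf_lt_of_mem c.2; (try simp only [MTree.node.sizeOf_spec] at *); omega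

end MTree

theorem Rpar_root {N : ℕ} (R : MTree N → ℕ) (T : MTree N) : Rpar R T T = 1 := if_pos rfl

theorem Rpar_eq_of_mem_children {N : ℕ} {T t c : MTree N} (R : MTree N → ℕ)
    (hT : T.Valid) (ht : t ∈ T.nodes) (hc : c ∈ t.children) :
    Rpar R T c = R t := by
  have hcT : c ≠ T := by
    have h1 := MTree.sizeOf_lt_of_mem_children hc
    have h2 := MTree.sizeOf_le_of_mem_nodes T t ht
    intro h; rw [h] at h1; omega
  rw [Rpar, if_neg hcT, MTree.parentIn_eq_of_mem_children T hT.1 hT.2.2 ht hc]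
  rfl
section IntermLemmas
open MTree
variable {N : ℕ} (D : Fin N → ℕ)

theorem interm_node_eq (R : MTree N → ℕ) (W : ∀ ν : MTree N, Fin (R ν) → ℕ → ℝ)
    (ts : List (MTree N)) (r : ℕ) (x : Idx D) :
    interm D R W (.node ts) r x =
      ∑ r' : Fin (R (.node ts)),
        W (.node ts) r' r * (ts.map fun c => interm D R W c (r' : ℕ) x).prod := by
  rw [interm]
  refine Finset.sum_congr rfl fun r' _ => ?_
  congr 1
  exact congrArg List.prod (List.attach_map_val (l := ts) (f := fun c => interm D R W c (↑r') x))

theorem interm_congr (R : MTree N → ℕ) :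
    ∀ (t : MTree N) (W W' : ∀ ν : MTree N, Fin (R ν) → ℕ → ℝ),
    (∀ u ∈ t.nodes, W u = W' u) → ∀ (r : ℕ) (x : Idx D),
      interm D R W t r x = interm D R W' t r x
  | .leaf i, W, W', h, r, x => by
    rw [interm, interm, h _ (mem_nodes_self _)]
  | .node ts, W, W', h, r, x => by
    rw [interm_node_eq, interm_node_eq, h _ (mem_nodes_self _)]
    refine Finset.sum_congr rfl fun r' _ => ?_
    congr 1
    refine congrArg List.prod (List.map_congr_left fun c hc => ?_)
    exact interm_congr R c W W'
      (fun u hu => h u (mem_nodes_trans _ hu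
        (mem_nodes_of_mem_children (t := MTree.node ts) (by rw [children]; exact hc)))) r' x
termination_by t => sizeOf t
decreasing_by have := List.sizeOf_lt_of_mem hc; (try simp only [MTree.node.sizeOf_spec] at *); omega

theorem interm_col_zero (R : MTree N → ℕ) (W : ∀ ν : MTree N, Fin (R ν) → ℕ → ℝ)
    (c : MTree N) (a : ℕ) (h : ∀ i : Fin (R c), W c i a = 0) (x : Idx D) :
    interm D R W c a x = 0 := by
  cases c with
  | leaf i =>
    rw [interm]
    split
    · exact h _
    · rfl
  | node ts =>
    rw [interm]
    exact Finset.sum_eq_zero fun r' _ => by rw [h r', zero_mul]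

theorem interm_anchor_aux (R : MTree N → ℕ) :
    ∀ (t : MTree N) {T ν : MTree N} {W W' : ∀ ν : MTree N, Fin (R ν) → ℕ → ℝ},
    T.Valid → t ∈ T.nodes → ν ∈ t.nodes →
    (∀ (r' : ℕ) (x : Idx D), interm D R W' ν r' x = interm D R W ν r' x) →
    (∀ μ, μ ∉ ν.nodes → W' μ = W μ) →
    ∀ (r' : ℕ) (x : Idx D), interm D R W' t r' x = interm D R W t r' x
  | .leaf i, T, ν, W, W', hval, ht, hν, h1, h2, r', x => by
    rw [nodes] at hν; rw [List.mem_singleton] at hν; subst hν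
    exact h1 r' x
  | .node ts, T, ν, W, W', hval, ht, hν, h1, h2, r', x => by
    by_cases htν : MTree.node ts = ν
    · subst htν; exact h1 r' x
    have hn : (MTree.node ts : MTree N).leafList.Nodup :=
      leafList_nodup_of_mem_nodes T hval.1 ht
    have hb : (MTree.node ts : MTree N).Branching :=
      branching_of_mem_nodes T hval.2.2 ht
    rw [nodes] at hν
    rcases List.mem_cons.1 hν with hν | hν
    · exact absurd hν.symm htν
    obtain ⟨c₁, -, hν₁⟩ := List.mem_flatMap.1 hν
    have hco : W' (MTree.node ts) = W (MTree.node ts) := by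
      apply h2
      intro hmem
      have hν' : ν ∈ (MTree.node ts : MTree N).nodes := by
        rw [nodes]; exact List.mem_cons.2 (Or.inr (List.mem_flatMap.2 ⟨c₁, List.mem_attach _ _, hν₁⟩))
      have a1 := eq_or_sizeOf_lt_of_mem_nodes hmem
      have a2 := eq_or_sizeOf_lt_of_mem_nodes hν'
      rcases a1 with a1 | a1
      · exact htν a1
      rcases a2 with a2 | a2
      · exact htν a2.symm
      omega
    rw [interm_node_eq, interm_node_eq, hco]
    refine Finset.sum_congr rfl fun r'' _ => ?_
    congr 1
    refine congrArg List.prod (List.map_congr_left fun c hc => ?_)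
    by_cases hνc : ν ∈ c.nodes
    · exact interm_anchor_aux R c hval
        (mem_nodes_trans _ (mem_nodes_of_mem_children (t := MTree.node ts)
          (by rw [children]; exact hc)) ht) hνc h1 h2 _ x
    · refine interm_congr D R c W' W (fun u hu => ?_) _ x
      apply h2
      intro huν
      rcases eq_or_ne c c₁.1 with rfl | hne
      · exact hνc hν₁
      · have : u ∈ c₁.1.nodes := mem_nodes_trans _ huν hν₁
        exact hne (unique_child_containing hn hb hc c₁.2 hu this)
termination_by t => sizeOf t
decreasing_by have := List.sizeOf_lt_of_mem hc; (try simp only [MTree.node.sizeOf_spec] at *); omega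

theorem endT_anchor_congr (R : MTree N → ℕ) {T ν : MTree N}
    {W W' : ∀ ν : MTree N, Fin (R ν) → ℕ → ℝ}
    (hval : T.Valid) (hν : ν ∈ T.nodes)
    (h1 : ∀ (r' : ℕ) (x : Idx D), interm D R W' ν r' x = interm D R W ν r' x)
    (h2 : ∀ μ, μ ∉ ν.nodes → W' μ = W μ) :
    endT D R W' T = endT D R W T := by
  funext x
  exact interm_anchor_aux D R T hval (mem_nodes_self T) hν h1 h2 0 x

theorem interm_eq_of_agree (R : MTree N → ℕ) :
    ∀ (t : MTree N) {T : MTree N} {W W' : ∀ ν : MTree N, Fin (R ν) → ℕ → ℝ},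
    T.Valid → t ∈ T.nodes →
    (∀ μ ∈ T.nodes, ∀ (i : Fin (R μ)) (j : ℕ), j < Rpar R T μ → W μ i j = W' μ i j) →
    ∀ r', r' < Rpar R T t → ∀ (x : Idx D), interm D R W t r' x = interm D R W' t r' x
  | .leaf m, T, W, W', hval, ht, hag, r', hr', x => by
    rw [interm, interm]
    split
    · exact hag _ ht _ r' hr'
    · rfl
  | .node ts, T, W, W', hval, ht, hag, r', hr', x => by
    rw [interm_node_eq, interm_node_eq]
    refine Finset.sum_congr rfl fun r'' _ => ?_
    rw [hag _ ht r'' r' hr']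
    congr 1
    refine congrArg List.prod (List.map_congr_left fun c hc => ?_)
    have hcch : c ∈ (MTree.node ts : MTree N).children := by rw [children]; exact hc
    have hcn : c ∈ T.nodes := mem_nodes_trans _ (mem_nodes_of_mem_children hcch) ht
    have hrp : Rpar R T c = R (MTree.node ts) := Rpar_eq_of_mem_children R hval ht hcch
    exact interm_eq_of_agree R c hval hcn hag r'' (by rw [hrp]; exact r''.isLt) x
termination_by t => sizeOf t
decreasing_by have := List.sizeOf_lt_of_mem hc; (try simp only [MTree.node.sizeOf_spec] at *); omega

theorem endT_eq_of_agree (R : MTree N → ℕ) {T : MTree N}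
    {W W' : ∀ ν : MTree N, Fin (R ν) → ℕ → ℝ} (hval : T.Valid)
    (hag : ∀ μ ∈ T.nodes, ∀ (i : Fin (R μ)) (j : ℕ), j < Rpar R T μ → W μ i j = W' μ i j) :
    endT D R W T = endT D R W' T := by
  funext x
  exact interm_eq_of_agree D R T hval (mem_nodes_self T) hag 0 (by rw [Rpar_root]; omega) x

end IntermLemmas
section Claim2
open MTree
variable {N : ℕ} (D : Fin N → ℕ) (R : MTree N → ℕ)

theorem upd_ne (W : ∀ ν : MTree N, Fin (R ν) → ℕ → ℝ) {μ μ' : MTree N} (i j : ℕ) (s : ℝ)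
    (h : μ' ≠ μ) : upd R W μ i j s μ' = W μ' := by
  funext i' j'
  simp only [upd]
  rw [if_neg (fun hc => h hc.1)]

theorem upd_congr_subtree (W : ∀ ν : MTree N, Fin (R ν) → ℕ → ℝ) {μ t : MTree N} (i j : ℕ) (s : ℝ)
    (h : sizeOf t < sizeOf μ) (r : ℕ) (x : Idx D) :
    interm D R (upd R W μ i j s) t r x = interm D R W t r x := by
  refine interm_congr D R t _ _ (fun u hu => ?_) r x
  refine upd_ne R W i j s (fun he => ?_)
  have := sizeOf_le_of_mem_nodes t u hu
  rw [he] at this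
  omega

theorem interm_upd_other_col (W : ∀ ν : MTree N, Fin (R ν) → ℕ → ℝ)
    (c₀ : MTree N) (i a : ℕ) (s : ℝ) {b : ℕ} (hb : b ≠ a) (x : Idx D) :
    interm D R (upd R W c₀ i a s) c₀ b x = interm D R W c₀ b x := by
  cases c₀ with
  | leaf m =>
    rw [interm, interm]
    split
    · simp only [upd]
      rw [if_neg (fun hc => hb hc.2.2)]
    · rfl
  | node ts₀ =>
    rw [interm_node_eq, interm_node_eq]
    refine Finset.sum_congr rfl fun r₃ _ => ?_
    have hcoef : upd R W (MTree.node ts₀) i a s (MTree.node ts₀) r₃ b = W (MTree.node ts₀) r₃ b := by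
      simp only [upd]
      rw [if_neg (fun hc => hb hc.2.2)]
    rw [hcoef]
    congr 1
    refine congrArg List.prod (List.map_congr_left fun c hc => ?_)
    exact upd_congr_subtree D R W i a s
      (sizeOf_lt_of_mem_children (t := MTree.node ts₀) (by rw [children]; exact hc)) _ x

theorem claim2_row {T ν : MTree N} (hval : T.Valid) (hν : ν ∈ T.nodes) (hint : ν.IsInterior)
    (Wp : ∀ ν : MTree N, Fin (R ν) → ℕ → ℝ) (a : ℕ)
    (hcol : ∀ c ∈ ν.children, ∀ i' : Fin (R c), Wp c i' a = 0)
    (j : ℕ) (s : ℝ) :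
    endT D R (upd R Wp ν a j s) T = endT D R Wp T := by
  cases ν with
  | leaf m => exact absurd hint (by rw [IsInterior]; exact not_false)
  | node ts =>
    have hbr : (MTree.node ts : MTree N).Branching := branching_of_mem_nodes T hval.2.2 hν
    have hts : ts ≠ [] := by rw [Branching] at hbr; exact hbr.1
    refine endT_anchor_congr D R hval hν (fun r' x => ?_) (fun μ hμ => ?_)
    · rw [interm_node_eq, interm_node_eq]
      refine Finset.sum_congr rfl fun r'' _ => ?_
      have hprod : (ts.map fun c => interm D R (upd R Wp (MTree.node ts) a j s) c (r'' : ℕ) x).prod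
          = (ts.map fun c => interm D R Wp c (r'' : ℕ) x).prod := by
        refine congrArg List.prod (List.map_congr_left fun c hc => ?_)
        exact upd_congr_subtree D R Wp a j s
          (sizeOf_lt_of_mem_children (t := MTree.node ts) (by rw [children]; exact hc)) _ x
      rw [hprod]
      by_cases hcond : (r'' : ℕ) = a ∧ r' = j
      · have hz : (ts.map fun c => interm D R Wp c (r'' : ℕ) x).prod = 0 := by
          obtain ⟨c₀, hc₀⟩ := List.exists_mem_of_ne_nil ts hts
          apply List.prod_eq_zero
          refine List.mem_map.2 ⟨c₀, hc₀, ?_⟩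
          rw [hcond.1]
          exact interm_col_zero D R Wp c₀ a
            (fun i' => hcol c₀ (by rw [children]; exact hc₀) i') x
        rw [hz, mul_zero, mul_zero]
      · congr 1
        simp only [upd]
        rw [if_neg (fun hc => hcond ⟨hc.2.1, hc.2.2⟩)]
    · exact upd_ne R Wp a j s (fun he => hμ (he ▸ mem_nodes_self μ))

theorem claim2_col {T ν : MTree N} (hval : T.Valid) (hν : ν ∈ T.nodes)
    (Wp : ∀ ν : MTree N, Fin (R ν) → ℕ → ℝ) (a : ℕ)
    (hrow : ∀ (i' : Fin (R ν)) (j' : ℕ), (i' : ℕ) = a → Wp ν i' j' = 0)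
    {c₀ : MTree N} (hc₀ : c₀ ∈ ν.children) (i : ℕ) (s : ℝ) :
    endT D R (upd R Wp c₀ i a s) T = endT D R Wp T := by
  have hc₀ν : c₀ ∈ ν.nodes := mem_nodes_of_mem_children hc₀
  have hνc₀ : ν ≠ c₀ := by
    intro he
    have := sizeOf_lt_of_mem_children hc₀
    rw [he] at this; omega
  cases ν with
  | leaf m => rw [children] at hc₀; exact absurd hc₀ List.not_mem_nil
  | node ts =>
    have hn : (MTree.node ts : MTree N).leafList.Nodup :=
      leafList_nodup_of_mem_nodes T hval.1 hν
    have hbr : (MTree.node ts : MTree N).Branching := branching_of_mem_nodes T hval.2.2 hν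
    rw [children] at hc₀
    refine endT_anchor_congr D R hval hν (fun r' x => ?_) (fun μ hμ => ?_)
    · rw [interm_node_eq, interm_node_eq]
      refine Finset.sum_congr rfl fun r'' _ => ?_
      have hcoef : upd R Wp c₀ i a s (MTree.node ts) r'' r' = Wp (MTree.node ts) r'' r' :=
        congrFun (congrFun (upd_ne R Wp i a s hνc₀) r'') r'
      rw [hcoef]
      by_cases hra : (r'' : ℕ) = a
      · rw [hrow r'' r' hra, zero_mul, zero_mul]
      · congr 1
        refine congrArg List.prod (List.map_congr_left fun c hc => ?_)
        rcases eq_or_ne c c₀ with rfl | hne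
        · exact interm_upd_other_col D R Wp c i a s hra x
        · refine interm_congr D R c _ _ (fun u hu => ?_) _ x
          refine upd_ne R Wp i a s (fun he => ?_)
          subst he
          exact hne (unique_child_containing hn hbr hc hc₀ hu (mem_nodes_self u))
    · refine upd_ne R Wp i a s (fun he => hμ ?_)
      subst he
      exact hc₀ν
end Claim2
section Embedding
open MTree
variable {N : ℕ} (D : Fin N → ℕ) (R : MTree N → ℕ) (T : MTree N)

/-- Finite index type of the "relevant" weight entries. -/
abbrev Iota : Type _ :=
  Σ μ : {x : MTree N // x ∈ T.nodes.toFinset}, Fin (R μ.1) × Fin (Rpar R T μ.1)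

noncomputable instance : DecidableEq (Iota R T) := Classical.decEq _

noncomputable def wembed (v : Iota R T → ℝ) : ∀ μ : MTree N, Fin (R μ) → ℕ → ℝ :=
  fun μ i j =>
    if h : μ ∈ T.nodes ∧ j < Rpar R T μ then v ⟨⟨μ, List.mem_toFinset.2 h.1⟩, i, ⟨j, h.2⟩⟩ else 0

def wrest (W : ∀ μ : MTree N, Fin (R μ) → ℕ → ℝ) : Iota R T → ℝ :=
  fun q => W q.1.1 q.2.1 q.2.2

theorem iota_eq_iff {μ : MTree N} (hμ : μ ∈ T.nodes) (i : Fin (R μ)) {j : ℕ}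
    (hj : j < Rpar R T μ) {μq : MTree N} (hq : μq ∈ T.nodes.toFinset)
    (iq : Fin (R μq)) (jq : Fin (Rpar R T μq)) :
    ((⟨⟨μ, List.mem_toFinset.2 hμ⟩, i, ⟨j, hj⟩⟩ : Iota R T) = ⟨⟨μq, hq⟩, iq, jq⟩) ↔
      (μ = μq ∧ (i : ℕ) = (iq : ℕ) ∧ j = (jq : ℕ)) := by
  constructor
  · intro h
    injection h with h1 h2
    have hμ' : μ = μq := congrArg Subtype.val h1
    subst hμ'
    have h2' : (⟨i, ⟨j, hj⟩⟩ : Fin (R μ) × Fin (Rpar R T μ)) = (iq, jq) := eq_of_heq h2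
    have h3 := congrArg Prod.fst h2'
    have h4 := congrArg Prod.snd h2'
    exact ⟨rfl, congrArg Fin.val h3, congrArg Fin.val h4⟩
  · rintro ⟨rfl, h2, h3⟩
    have hi : i = iq := Fin.ext h2
    have hjq : (⟨j, hj⟩ : Fin (Rpar R T μ)) = jq := Fin.ext h3
    subst hi; subst hjq; rfl

theorem wembed_relevant (v : Iota R T → ℝ) {μ : MTree N} (hμ : μ ∈ T.nodes)
    (i : Fin (R μ)) {j : ℕ} (hj : j < Rpar R T μ) :
    wembed R T v μ i j = v ⟨⟨μ, List.mem_toFinset.2 hμ⟩, i, ⟨j, hj⟩⟩ := by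
  simp only [wembed]
  rw [dif_pos ⟨hμ, hj⟩]

theorem wembed_add_single (v : Iota R T → ℝ) {μq : MTree N} (hq : μq ∈ T.nodes.toFinset)
    (iq : Fin (R μq)) (jq : Fin (Rpar R T μq)) (c : ℝ) :
    wembed R T (v + c • (Pi.single (⟨⟨μq, hq⟩, iq, jq⟩ : Iota R T) (1 : ℝ) : Iota R T → ℝ))
      = upd R (wembed R T v) μq (iq : ℕ) (jq : ℕ)
          (v ⟨⟨μq, hq⟩, iq, jq⟩ + c) := by
  have hμqn : μq ∈ T.nodes := List.mem_toFinset.1 hq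
  funext μ i j
  simp only [upd]
  by_cases hrel : μ ∈ T.nodes ∧ j < Rpar R T μ
  · rw [wembed_relevant R T _ hrel.1 i hrel.2]
    simp only [Pi.add_apply, Pi.smul_apply, smul_eq_mul]
    rw [Pi.single_apply]
    by_cases hc : μ = μq ∧ (i : ℕ) = (iq : ℕ) ∧ j = (jq : ℕ)
    · rw [if_pos hc]
      have hpq := (iota_eq_iff R T hrel.1 i hrel.2 hq iq jq).2 hc
      rw [if_pos hpq, hpq, mul_one]
    · rw [if_neg hc]
      rw [if_neg (fun hpq => hc ((iota_eq_iff R T hrel.1 i hrel.2 hq iq jq).1 hpq))]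
      rw [mul_zero, add_zero, wembed_relevant R T v hrel.1 i hrel.2]
  · have hcond : ¬(μ = μq ∧ (i : ℕ) = (iq : ℕ) ∧ j = (jq : ℕ)) := by
      rintro ⟨rfl, -, hj⟩
      exact hrel ⟨hμqn, by rw [hj]; exact jq.isLt⟩
    rw [if_neg hcond]
    simp only [wembed]
    rw [dif_neg hrel, dif_neg hrel]

theorem upd_eq_wembed (hval : T.Valid) (W : ∀ μ : MTree N, Fin (R μ) → ℕ → ℝ)
    {μq : MTree N} (hq : μq ∈ T.nodes.toFinset) (iq : Fin (R μq)) (jq : Fin (Rpar R T μq))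
    (s : ℝ) :
    endT D R (upd R W μq (iq : ℕ) (jq : ℕ) s) T
      = endT D R (wembed R T (wrest R T W + (s - W μq iq (jq : ℕ)) •
          (Pi.single (⟨⟨μq, hq⟩, iq, jq⟩ : Iota R T) (1 : ℝ) : Iota R T → ℝ))) T := by
  rw [wembed_add_single]
  have hval0 : wrest R T W ⟨⟨μq, hq⟩, iq, jq⟩ + (s - W μq iq (jq : ℕ)) = s := by
    simp only [wrest]; ring
  rw [hval0]
  apply endT_eq_of_agree D R hval
  intro μ hμ i j hj
  simp only [upd]
  split
  · rfl
  · rw [wembed_relevant R T _ hμ i hj]; rfl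

theorem wembed_coord_contDiff (μ : MTree N) (i : Fin (R μ)) (j : ℕ) :
    ContDiff ℝ ⊤ (fun v : Iota R T → ℝ => wembed R T v μ i j) := by
  simp only [wembed]
  by_cases h : μ ∈ T.nodes ∧ j < Rpar R T μ
  · simp only [dif_pos h]
    exact (ContinuousLinearMap.proj (R := ℝ) (φ := fun _ : Iota R T => ℝ) _).contDiff
  · simp only [dif_neg h]
    exact contDiff_const

theorem contDiff_list_prod (b : ℕ) (x : Idx D) : ∀ (l : List (MTree N)),
    (∀ c ∈ l, ContDiff ℝ ⊤ fun v : Iota R T → ℝ => interm D R (wembed R T v) c b x) →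
    ContDiff ℝ ⊤ fun v : Iota R T → ℝ => (l.map fun c => interm D R (wembed R T v) c b x).prod
  | [], _ => by
    simp only [List.map_nil, List.prod_nil]
    exact contDiff_const
  | c :: l, h => by
    simp only [List.map_cons, List.prod_cons]
    exact (h c List.mem_cons_self).mul
      (contDiff_list_prod b x l (fun c' hc' => h c' (List.mem_cons_of_mem _ hc')))

theorem interm_wembed_contDiff : ∀ (t : MTree N) (b : ℕ) (x : Idx D),
    ContDiff ℝ ⊤ fun v : Iota R T → ℝ => interm D R (wembed R T v) t b x
  | .leaf m, b, x => by
    simp only [interm]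
    by_cases h : R (.leaf m) = D m
    · simp only [dif_pos h]
      exact wembed_coord_contDiff R T _ _ _
    · simp only [dif_neg h]
      exact contDiff_const
  | .node ts, b, x => by
    have heq : (fun v : Iota R T → ℝ => interm D R (wembed R T v) (.node ts) b x)
        = fun v : Iota R T → ℝ => ∑ r' : Fin (R (.node ts)),
            wembed R T v (.node ts) r' b *
              (ts.map fun c => interm D R (wembed R T v) c (r' : ℕ) x).prod :=
      funext fun v => interm_node_eq D R (wembed R T v) ts b x
    rw [heq]
    apply ContDiff.sum
    intro r' _
    exact (wembed_coord_contDiff R T _ _ _).mul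
      (contDiff_list_prod D R T (r' : ℕ) x ts (fun c hc => interm_wembed_contDiff c (r' : ℕ) x))
termination_by t => sizeOf t
decreasing_by have := List.sizeOf_lt_of_mem hc; (try simp only [MTree.node.sizeOf_spec] at *); omega

end Embedding
section Pruned
open MTree
variable {N : ℕ} (D : Fin N → ℕ) (R : MTree N → ℕ) {T ν : MTree N}

theorem wembed_pruned_const_row (hval : T.Valid) (hν : ν ∈ T.nodes) (hint : ν.IsInterior)
    (r : Fin (R ν)) (v : Iota R T → ℝ)
    (hvcol : ∀ (c : MTree N) (hc : c ∈ ν.children) (i : Fin (R c)) (jq : Fin (Rpar R T c)),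
      (jq : ℕ) = (r : ℕ) →
      v ⟨⟨c, List.mem_toFinset.2 (mem_nodes_trans _ (mem_nodes_of_mem_children hc) hν)⟩, i, jq⟩ = 0)
    (jq : Fin (Rpar R T ν))
    (hv0 : v ⟨⟨ν, List.mem_toFinset.2 hν⟩, r, jq⟩ = 0) (s : ℝ) :
    endT D R (wembed R T (v + s • (Pi.single (⟨⟨ν, List.mem_toFinset.2 hν⟩, r, jq⟩ : Iota R T)
      (1 : ℝ) : Iota R T → ℝ))) T = endT D R (wembed R T v) T := by
  rw [wembed_add_single, hv0, zero_add]
  have hPcol : ∀ c ∈ ν.children, ∀ i' : Fin (R c), wembed R T v c i' (r : ℕ) = 0 := by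
    intro c hc i'
    have hcn : c ∈ T.nodes := mem_nodes_trans _ (mem_nodes_of_mem_children hc) hν
    have hrp : (r : ℕ) < Rpar R T c := by
      rw [Rpar_eq_of_mem_children R hval hν hc]; exact r.isLt
    rw [wembed_relevant R T v hcn i' hrp]
    exact hvcol c hc i' ⟨(r : ℕ), hrp⟩ rfl
  exact claim2_row D R hval hν hint (wembed R T v) (r : ℕ) hPcol (jq : ℕ) _

theorem wembed_pruned_const_col (hval : T.Valid) (hν : ν ∈ T.nodes)
    (r : Fin (R ν)) (v : Iota R T → ℝ)
    (hvrow : ∀ (i : Fin (R ν)) (jq : Fin (Rpar R T ν)), (i : ℕ) = (r : ℕ) →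
      v ⟨⟨ν, List.mem_toFinset.2 hν⟩, i, jq⟩ = 0)
    {c₀ : MTree N} (hc₀ : c₀ ∈ ν.children) (i : Fin (R c₀))
    (hrp : (r : ℕ) < Rpar R T c₀)
    (hv0 : v ⟨⟨c₀, List.mem_toFinset.2 (mem_nodes_trans _ (mem_nodes_of_mem_children hc₀) hν)⟩,
      i, ⟨(r : ℕ), hrp⟩⟩ = 0)
    (s : ℝ) :
    endT D R (wembed R T (v + s • (Pi.single
      (⟨⟨c₀, List.mem_toFinset.2 (mem_nodes_trans _ (mem_nodes_of_mem_children hc₀) hν)⟩,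
        i, ⟨(r : ℕ), hrp⟩⟩ : Iota R T) (1 : ℝ) : Iota R T → ℝ))) T
      = endT D R (wembed R T v) T := by
  rw [wembed_add_single, hv0, zero_add]
  have hProw : ∀ (i' : Fin (R ν)) (j' : ℕ), (i' : ℕ) = (r : ℕ) → wembed R T v ν i' j' = 0 := by
    intro i' j' hi'
    by_cases hj' : j' < Rpar R T ν
    · rw [wembed_relevant R T v hν i' hj']
      exact hvrow i' ⟨j', hj'⟩ hi'
    · simp only [wembed]
      rw [dif_neg (fun hh => hj' hh.2)]
  exact claim2_col D R hval hν (wembed R T v) (r : ℕ) hProw hc₀ (i : ℕ) _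

end Pruned

section DerivId
open MTree
variable {N : ℕ} (D : Fin N → ℕ) (L : (Idx D → ℝ) → ℝ) (R : MTree N → ℕ) (T : MTree N)

/-- derivative of f along an affine line equals fderiv applied to the direction. -/
theorem deriv_along {E : Type*} [NormedAddCommGroup E] [NormedSpace ℝ E]
    (f : E → ℝ) (hf : Differentiable ℝ f) (a u : E) (s₀ : ℝ) :
    deriv (fun s => f (a + (s - s₀) • u)) s₀ = fderiv ℝ f a u := by
  have hγ : HasDerivAt (fun s : ℝ => a + (s - s₀) • u) u s₀ := by
    simpa using (((hasDerivAt_id s₀).sub_const s₀).smul_const u).const_add a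
  have h := ((hf (a + (s₀ - s₀) • u)).hasFDerivAt).comp_hasDerivAt s₀ hγ
  have h' : HasDerivAt (fun s => f (a + (s - s₀) • u))
      (fderiv ℝ f (a + (s₀ - s₀) • u) u) s₀ := h
  rw [h'.deriv]
  simp

noncomputable def Gmap (v : Iota R T → ℝ) : Idx D → ℝ := endT D R (wembed R T v) T

theorem Gmap_contDiff (x : Idx D) : ContDiff ℝ ⊤ fun v : Iota R T → ℝ => Gmap D R T v x :=
  interm_wembed_contDiff D R T T 0 x

theorem Gmap_differentiable : Differentiable ℝ (Gmap D R T) :=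
  differentiable_pi.2 fun x => (Gmap_contDiff D R T x).differentiable (by simp)

noncomputable def phiH (v : Iota R T → ℝ) : ℝ := L (Gmap D R T v)

theorem phiH_differentiable (hL : Differentiable ℝ L) : Differentiable ℝ (phiH D L R T) :=
  fun v => (hL (Gmap D R T v)).comp v (Gmap_differentiable D R T v)

theorem dObj_eq (hval : T.Valid) (hL : Differentiable ℝ L)
    (W : ∀ μ : MTree N, Fin (R μ) → ℕ → ℝ)
    {μq : MTree N} (hq : μq ∈ T.nodes.toFinset) (iq : Fin (R μq)) (jq : Fin (Rpar R T μq)) :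
    dObj D L R T W μq (iq : ℕ) (jq : ℕ)
      = fderiv ℝ (phiH D L R T) (wrest R T W)
          (Pi.single (⟨⟨μq, hq⟩, iq, jq⟩ : Iota R T) (1 : ℝ)) := by
  rw [dObj]
  have hfun : (fun s => obj D L R T (upd R W μq (iq : ℕ) (jq : ℕ) s))
      = fun s => phiH D L R T (wrest R T W + (s - W μq iq (jq : ℕ)) •
          (Pi.single (⟨⟨μq, hq⟩, iq, jq⟩ : Iota R T) (1 : ℝ) : Iota R T → ℝ)) := by
    funext s
    rw [obj, phiH, Gmap, upd_eq_wembed D R T hval W hq iq jq s]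
  have hwent : went R W μq (iq : ℕ) (jq : ℕ) = W μq iq (jq : ℕ) := by
    rw [went, dif_pos iq.isLt]
  rw [hfun, hwent]
  exact deriv_along _ (phiH_differentiable D L R T hL) _ _ _

theorem tgrad_eq (hL : Differentiable ℝ L) (A : Idx D → ℝ) (x : Idx D) :
    tgrad D L A x = fderiv ℝ L A (Pi.single x 1) := by
  rw [tgrad]
  have hupd : (fun s => L (Function.update A x s))
      = fun s => L (A + (s - A x) • (Pi.single x 1 : Idx D → ℝ)) := by
    funext s
    congr 1
    funext y
    classical
    simp only [Function.update_apply, Pi.add_apply, Pi.smul_apply, Pi.single_apply,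
      smul_eq_mul]
    by_cases hy : y = x
    · rw [if_pos hy, if_pos hy, mul_one]; subst hy; ring
    · rw [if_neg hy, if_neg hy, mul_zero, add_zero]
  rw [hupd]
  exact deriv_along _ hL _ _ _

theorem fderiv_L_eq_sum (hL : Differentiable ℝ L) (A : Idx D → ℝ) (u : Idx D → ℝ) :
    fderiv ℝ L A u = ∑ x, u x * tgrad D L A x := by
  classical
  have hu : u = ∑ x, u x • (Pi.single x 1 : Idx D → ℝ) := by
    funext y
    rw [Finset.sum_apply]
    simp [Pi.single_apply]
  conv_lhs => rw [hu]
  rw [map_sum]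
  refine Finset.sum_congr rfl fun x _ => ?_
  rw [ContinuousLinearMap.map_smul, tgrad_eq D L hL A x]
  simp [smul_eq_mul]

theorem fderiv_phiH (hL : Differentiable ℝ L) (v u : Iota R T → ℝ) :
    fderiv ℝ (phiH D L R T) v u
      = fderiv ℝ L (Gmap D R T v) (fun x => fderiv ℝ (fun w => Gmap D R T w x) v u) := by
  have hGc : ∀ x, HasFDerivAt (fun w => Gmap D R T w x)
      (fderiv ℝ (fun w => Gmap D R T w x) v) v :=
    fun x => (((Gmap_contDiff D R T x).differentiable (by simp)) v).hasFDerivAt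
  have hG : HasFDerivAt (Gmap D R T)
      (ContinuousLinearMap.pi fun x => fderiv ℝ (fun w => Gmap D R T w x) v) v :=
    hasFDerivAt_pi.2 hGc
  have hcomp := ((hL (Gmap D R T v)).hasFDerivAt).comp v hG
  have : fderiv ℝ (phiH D L R T) v = ((fderiv ℝ L (Gmap D R T v)).comp
      (ContinuousLinearMap.pi fun x => fderiv ℝ (fun w => Gmap D R T w x) v)) :=
    (show HasFDerivAt (phiH D L R T) _ v from hcomp).fderiv
  rw [this]
  rfl

end DerivId
section MoreHelp
open MTree
variable {N : ℕ} (D : Fin N → ℕ) (L : (Idx D → ℝ) → ℝ) (R : MTree N → ℕ) (T : MTree N)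

theorem dObj_eq' (hval : T.Valid) (hL : Differentiable ℝ L)
    (W : ∀ μ : MTree N, Fin (R μ) → ℕ → ℝ) (q : Iota R T) :
    dObj D L R T W q.1.1 (q.2.1 : ℕ) (q.2.2 : ℕ)
      = fderiv ℝ (phiH D L R T) (wrest R T W) (Pi.single q (1 : ℝ)) := by
  obtain ⟨⟨μq, hq⟩, ⟨iq, jq⟩⟩ := q
  exact dObj_eq D L R T hval hL W hq iq jq

theorem exists_lipschitz_of_contDiff {E : Type*} [NormedAddCommGroup E] [NormedSpace ℝ E]
    [ProperSpace E] (f : E → ℝ) (hf : ContDiff ℝ ⊤ f) (ρ : ℝ) :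
    ∃ C, 0 ≤ C ∧ ∀ v ∈ Metric.closedBall (0 : E) ρ, ∀ w ∈ Metric.closedBall (0 : E) ρ,
      ‖f v - f w‖ ≤ C * ‖v - w‖ := by
  obtain ⟨C, hC⟩ := (isCompact_closedBall (0 : E) ρ).exists_bound_of_continuousOn
    (((hf.fderiv_right (m := ⊤) le_top).continuous).continuousOn)
  refine ⟨max C 0, le_max_right _ _, fun v hv w hw => ?_⟩
  exact (convex_closedBall (0 : E) ρ).norm_image_sub_le_of_norm_fderiv_le
    (fun z _ => (hf.differentiable (by simp)).differentiableAt)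
    (fun z hz => le_trans (hC z hz) (le_max_left _ _)) hw hv

theorem hqx_contDiff (q : Iota R T) (x : Idx D) :
    ContDiff ℝ ⊤ fun v : Iota R T → ℝ =>
      fderiv ℝ (fun w => Gmap D R T w x) v (Pi.single q (1 : ℝ)) := by
  have h1 : ContDiff ℝ ⊤ (fderiv ℝ (fun w : Iota R T → ℝ => Gmap D R T w x)) :=
    (Gmap_contDiff D R T x).fderiv_right (m := ⊤) le_top
  exact (ContinuousLinearMap.apply ℝ ℝ ((Pi.single q (1 : ℝ) : Iota R T → ℝ))).contDiff.comp h1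

end MoreHelp
end HTF
open HTF HTF.MTree in
/-- under gradient flow, if at some time `t₀ ≥ 0` all weight vectors
of the `(ν,r)`'th local component vanish, then they vanish at every time `t ≥ 0`. -/
theorem statement10 {N : ℕ} (D : Fin N → ℕ) (L : (Idx D → ℝ) → ℝ)
    (hL : Differentiable ℝ L) (hLs : LocSmooth D L) (hL0 : ∀ A, 0 ≤ L A)
    (T : MTree N) (hT : T.Valid)
    (R : MTree N → ℕ) (hR : ∀ i : Fin N, R (MTree.leaf i) = D i)
    (Wt : ℝ → ∀ ν : MTree N, Fin (R ν) → ℕ → ℝ)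
    (hflow : GradFlow D L R T Wt)
    (ν : MTree N) (hν : ν ∈ T.nodes) (hint : ν.IsInterior) (r : Fin (R ν))
    (t₀ : ℝ) (ht₀ : 0 ≤ t₀)
    (hrow0 : ∀ j : ℕ, j < Rpar R T ν → Wt t₀ ν r j = 0)
    (hcol0 : ∀ c ∈ ν.children, ∀ i : Fin (R c), Wt t₀ c i (r : ℕ) = 0) :
    ∀ t : ℝ, 0 ≤ t →
      (∀ j : ℕ, j < Rpar R T ν → Wt t ν r j = 0) ∧
      (∀ c ∈ ν.children, ∀ i : Fin (R c), Wt t c i (r : ℕ) = 0) := by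
  classical
  intro t ht
  have hνf : ν ∈ T.nodes.toFinset := List.mem_toFinset.2 hν
  set b : ℝ := max t t₀ with hbdef
  have hb0 : (0:ℝ) ≤ b := le_trans ht (le_max_left _ _)
  have htb : t ∈ Set.Icc (0:ℝ) b := ⟨ht, le_max_left _ _⟩
  have ht₀b : t₀ ∈ Set.Icc (0:ℝ) b := ⟨ht₀, le_max_right _ _⟩
  -- the set of local-component coordinates
  set Q : Finset (Iota R T) := Finset.univ.filter (fun q =>
    (q.1.1 = ν ∧ (q.2.1 : ℕ) = (r : ℕ)) ∨ (q.1.1 ∈ ν.children ∧ (q.2.2 : ℕ) = (r : ℕ)))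
    with hQdef
  have hmemQ : ∀ q : Iota R T,
      ((q.1.1 = ν ∧ (q.2.1 : ℕ) = (r : ℕ)) ∨ (q.1.1 ∈ ν.children ∧ (q.2.2 : ℕ) = (r : ℕ)))
      → q ∈ Q := fun q hq => Finset.mem_filter.2 ⟨Finset.mem_univ _, hq⟩
  have hQmem : ∀ q ∈ Q,
      ((q.1.1 = ν ∧ (q.2.1 : ℕ) = (r : ℕ)) ∨ (q.1.1 ∈ ν.children ∧ (q.2.2 : ℕ) = (r : ℕ))) :=
    fun q hq => (Finset.mem_filter.1 hq).2
  -- trajectory in coordinate space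
  set vt : ℝ → Iota R T → ℝ := fun s => wrest R T (Wt s) with hvtdef
  set g : ℝ → ℝ := fun s => ∑ q ∈ Q, (vt s q) ^ 2 with hgdef
  have hgnn : ∀ s, 0 ≤ g s := fun s => Finset.sum_nonneg fun q _ => sq_nonneg _
  have hcoordsq : ∀ s, ∀ q ∈ Q, |vt s q| ≤ Real.sqrt (g s) := by
    intro s q hq
    rw [← Real.sqrt_sq_eq_abs]
    exact Real.sqrt_le_sqrt (Finset.single_le_sum (fun q' _ => sq_nonneg (vt s q')) hq)
  -- prune operator
  set pr : (Iota R T → ℝ) → (Iota R T → ℝ) := fun v q => if q ∈ Q then 0 else v q with hprdef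
  have hprn : ∀ v : Iota R T → ℝ, ‖pr v‖ ≤ ‖v‖ := by
    intro v
    refine (pi_norm_le_iff_of_nonneg (norm_nonneg v)).2 fun q => ?_
    by_cases hq : q ∈ Q
    · simp only [hprdef, if_pos hq, norm_zero]; exact norm_nonneg v
    · simp only [hprdef, if_neg hq]; exact norm_le_pi_norm v q
  have hprd : ∀ s, ‖vt s - pr (vt s)‖ ≤ Real.sqrt (g s) := by
    intro s
    refine (pi_norm_le_iff_of_nonneg (Real.sqrt_nonneg _)).2 fun q => ?_
    by_cases hq : q ∈ Q
    · simp only [hprdef, Pi.sub_apply, if_pos hq, sub_zero]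
      exact hcoordsq s q hq
    · simp only [hprdef, Pi.sub_apply, if_neg hq, sub_self, norm_zero]
      exact Real.sqrt_nonneg _
  have hprzero : ∀ (v : Iota R T → ℝ), ∀ q ∈ Q, pr v q = 0 := by
    intro v q hq; simp only [hprdef, if_pos hq]
  -- initial condition
  have hg0 : g t₀ = 0 := by
    apply Finset.sum_eq_zero
    rintro ⟨⟨μq, hqf⟩, iq, jq⟩ hq
    have hq2 := hQmem _ hq
    have hval : vt t₀ ⟨⟨μq, hqf⟩, iq, jq⟩ = Wt t₀ μq iq (jq : ℕ) := rfl
    rcases hq2 with ⟨h1, h2⟩ | ⟨h1, h2⟩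
    · simp only at h1 h2
      subst h1
      have hiq : iq = r := Fin.ext h2
      subst hiq
      rw [hval, hrow0 (jq : ℕ) jq.isLt]
      norm_num
    · simp only at h1 h2
      rw [hval, show ((jq : ℕ)) = (r : ℕ) from h2, hcol0 μq h1 iq]
      norm_num
  -- continuity of the coordinate trajectory
  have hvcont : ContinuousOn vt (Set.Icc 0 b) := by
    refine continuousOn_pi.2 fun q => fun s hs => ?_
    exact ((hflow q.1.1 q.2.1 (q.2.2 : ℕ) s hs.1).continuousAt).continuousWithinAt
  -- radius bound
  obtain ⟨ρ₁, hρ₁⟩ := isCompact_Icc.exists_bound_of_continuousOn hvcont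
  set ρ : ℝ := max ρ₁ 0 with hρdef
  have hρ : ∀ s ∈ Set.Icc (0:ℝ) b, vt s ∈ Metric.closedBall (0 : Iota R T → ℝ) ρ := by
    intro s hs
    rw [Metric.mem_closedBall, dist_zero_right]
    exact le_trans (hρ₁ s hs) (le_max_left _ _)
  have hρpr : ∀ s ∈ Set.Icc (0:ℝ) b, pr (vt s) ∈ Metric.closedBall (0 : Iota R T → ℝ) ρ := by
    intro s hs
    rw [Metric.mem_closedBall, dist_zero_right]
    exact le_trans (hprn (vt s)) (le_trans (hρ₁ s hs) (le_max_left _ _))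
  -- gradient bound
  have hGcont : ContinuousOn (fun s => Gmap D R T (vt s)) (Set.Icc 0 b) :=
    (Gmap_differentiable D R T).continuous.comp_continuousOn hvcont
  obtain ⟨β, hβ⟩ := hLs ((fun s => Gmap D R T (vt s)) '' (Set.Icc 0 b))
    (isCompact_Icc.image_of_continuousOn hGcont)
  obtain ⟨ρG, hρG⟩ := (isCompact_Icc.image_of_continuousOn hGcont).exists_bound_of_continuousOn
    continuousOn_id
  set A0 : Idx D → ℝ := Gmap D R T (vt 0) with hA0def
  have hA0 : A0 ∈ (fun s => Gmap D R T (vt s)) '' (Set.Icc 0 b) :=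
    ⟨0, ⟨le_refl 0, hb0⟩, rfl⟩
  set Mg : ℝ := max (‖tgrad D L A0‖ + (β : ℝ) * (2 * ρG)) 0 with hMgdef
  have hMg0 : 0 ≤ Mg := le_max_right _ _
  have hMg : ∀ s ∈ Set.Icc (0:ℝ) b, ∀ x : Idx D,
      |tgrad D L (Gmap D R T (vt s)) x| ≤ Mg := by
    intro s hs x
    have hmem : Gmap D R T (vt s) ∈ (fun s => Gmap D R T (vt s)) '' (Set.Icc 0 b) :=
      ⟨s, hs, rfl⟩
    have h1 : |tgrad D L (Gmap D R T (vt s)) x| ≤ ‖tgrad D L (Gmap D R T (vt s))‖ := by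
      simpa [Real.norm_eq_abs] using norm_le_pi_norm (tgrad D L (Gmap D R T (vt s))) x
    have h2 : ‖tgrad D L (Gmap D R T (vt s))‖
        ≤ ‖tgrad D L (Gmap D R T (vt s)) - tgrad D L A0‖ + ‖tgrad D L A0‖ := by
      have := norm_add_le (tgrad D L (Gmap D R T (vt s)) - tgrad D L A0) (tgrad D L A0)
      rwa [sub_add_cancel] at this
    have h3 : ‖tgrad D L (Gmap D R T (vt s)) - tgrad D L A0‖
        ≤ (β : ℝ) * ‖Gmap D R T (vt s) - A0‖ := by
      have := hβ.dist_le_mul _ hmem _ hA0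
      rwa [dist_eq_norm, dist_eq_norm] at this
    have h4 : ‖Gmap D R T (vt s) - A0‖ ≤ 2 * ρG := by
      calc ‖Gmap D R T (vt s) - A0‖ ≤ ‖Gmap D R T (vt s)‖ + ‖A0‖ := norm_sub_le _ _
        _ ≤ ρG + ρG := add_le_add (hρG _ hmem) (hρG _ hA0)
        _ = 2 * ρG := by ring
    calc |tgrad D L (Gmap D R T (vt s)) x|
        ≤ ‖tgrad D L (Gmap D R T (vt s)) - tgrad D L A0‖ + ‖tgrad D L A0‖ := le_trans h1 h2
      _ ≤ (β : ℝ) * (2 * ρG) + ‖tgrad D L A0‖ := by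
          refine add_le_add ?_ (le_refl _)
          exact le_trans h3 (by
            have hβ0 : (0:ℝ) ≤ (β : ℝ) := β.2
            nlinarith [h4])
      _ ≤ Mg := by rw [hMgdef]; refine le_trans (le_of_eq (by ring)) (le_max_left _ _)
  -- vanishing of the directional derivatives at pruned points
  have hBzero : ∀ q ∈ Q, ∀ (x : Idx D) (v : Iota R T → ℝ),
      fderiv ℝ (fun w => Gmap D R T w x) (pr v) (Pi.single q (1:ℝ)) = 0 := by
    rintro ⟨⟨μq, hqf⟩, iq, jq⟩ hq x v
    have hq2 := hQmem _ hq
    set e : Iota R T → ℝ := Pi.single (⟨⟨μq, hqf⟩, iq, jq⟩ : Iota R T) (1:ℝ) with hedef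
    have hconst : ∀ s : ℝ,
        Gmap D R T (pr v + s • e) = Gmap D R T (pr v) := by
      intro s
      rcases hq2 with ⟨h1, h2⟩ | ⟨h1, h2⟩
      · simp only at h1 h2
        subst h1
        have hiq : iq = r := Fin.ext h2
        subst hiq
        exact wembed_pruned_const_row D R hT hν hint iq (pr v)
          (fun c hc i jq' hjq' => hprzero v _ (hmemQ _ (Or.inr ⟨hc, hjq'⟩)))
          jq (hprzero v _ (hmemQ _ (Or.inl ⟨rfl, rfl⟩))) s
      · simp only at h1 h2
        have hrp : (r : ℕ) < Rpar R T μq := by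
          rw [Rpar_eq_of_mem_children R hT hν h1]; exact r.isLt
        have hjq : jq = ⟨(r : ℕ), hrp⟩ := Fin.ext h2
        subst hjq
        exact wembed_pruned_const_col D R hT hν r (pr v)
          (fun i' jq' hi' => hprzero v _ (hmemQ _ (Or.inl ⟨rfl, hi'⟩)))
          h1 iq hrp (hprzero v _ (hmemQ _ (Or.inr ⟨h1, rfl⟩))) s
    have hγ : HasDerivAt (fun s : ℝ => pr v + s • e) e 0 := by
      simpa using ((hasDerivAt_id (0:ℝ)).smul_const e).const_add (pr v)
    have hfd : HasFDerivAt (fun w => Gmap D R T w x)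
        (fderiv ℝ (fun w => Gmap D R T w x) (pr v + (0:ℝ) • e)) (pr v + (0:ℝ) • e) :=
      (((Gmap_contDiff D R T x).differentiable (by simp)) _).hasFDerivAt
    have hcomp := hfd.comp_hasDerivAt 0 hγ
    have hc0 : (fun s : ℝ => (fun w => Gmap D R T w x) (pr v + s • e))
        = fun _ => Gmap D R T (pr v) x := funext fun s => congrFun (hconst s) x
    have hzero : HasDerivAt (fun s : ℝ => (fun w => Gmap D R T w x) (pr v + s • e)) 0 0 := by
      rw [hc0]; exact hasDerivAt_const _ _
    have huniq := hcomp.unique hzero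
    simpa using huniq
  -- the per-coordinate bound on the objective gradient
  have hCq : ∀ q ∈ Q, ∃ Cq : ℝ, 0 ≤ Cq ∧ ∀ s ∈ Set.Icc (0:ℝ) b,
      |fderiv ℝ (phiH D L R T) (vt s) (Pi.single q (1:ℝ))| ≤ Cq * Real.sqrt (g s) := by
    intro q hq
    have hlip := fun x : Idx D => exists_lipschitz_of_contDiff
      (fun v : Iota R T → ℝ => fderiv ℝ (fun w => Gmap D R T w x) v (Pi.single q (1:ℝ)))
      (hqx_contDiff D R T q x) ρ
    choose Lam hLam0 hLam using hlip
    refine ⟨Mg * ∑ x, Lam x, mul_nonneg hMg0 (Finset.sum_nonneg fun x _ => hLam0 x), fun s hs => ?_⟩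
    rw [fderiv_phiH D L R T hL, fderiv_L_eq_sum D L hL]
    have hbx : ∀ x : Idx D,
        |fderiv ℝ (fun w => Gmap D R T w x) (vt s) (Pi.single q (1:ℝ))|
          ≤ Lam x * Real.sqrt (g s) := by
      intro x
      have h1 := hLam x (vt s) (hρ s hs) (pr (vt s)) (hρpr s hs)
      rw [hBzero q hq x (vt s), sub_zero] at h1
      calc |fderiv ℝ (fun w => Gmap D R T w x) (vt s) (Pi.single q (1:ℝ))|
          = ‖fderiv ℝ (fun w => Gmap D R T w x) (vt s) (Pi.single q (1:ℝ))‖ :=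
            (Real.norm_eq_abs _).symm
        _ ≤ Lam x * ‖vt s - pr (vt s)‖ := h1
        _ ≤ Lam x * Real.sqrt (g s) := mul_le_mul_of_nonneg_left (hprd s) (hLam0 x)
    calc |∑ x : Idx D, fderiv ℝ (fun w => Gmap D R T w x) (vt s) (Pi.single q (1:ℝ))
            * tgrad D L (Gmap D R T (vt s)) x|
        ≤ ∑ x : Idx D, |fderiv ℝ (fun w => Gmap D R T w x) (vt s) (Pi.single q (1:ℝ))
            * tgrad D L (Gmap D R T (vt s)) x| := Finset.abs_sum_le_sum_abs _ _
      _ ≤ ∑ x : Idx D, (Lam x * Real.sqrt (g s)) * Mg := by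
          refine Finset.sum_le_sum fun x _ => ?_
          rw [abs_mul]
          exact mul_le_mul (hbx x) (hMg s hs x) (abs_nonneg _)
            (mul_nonneg (hLam0 x) (Real.sqrt_nonneg _))
      _ = (Mg * ∑ x : Idx D, Lam x) * Real.sqrt (g s) := by
          rw [← Finset.sum_mul, ← Finset.sum_mul]
          ring
  -- Gronwall
  have hgzero : g t = 0 := by
    choose Cq hCq0 hCqb using fun (q : {q // q ∈ Q}) => hCq q.1 q.2
    set Ksum : ℝ := ∑ q ∈ Q.attach, Cq q with hKdef
    set f' : ℝ → ℝ := fun s => ∑ q ∈ Q.attach,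
      2 * vt s q.1 * (- fderiv ℝ (phiH D L R T) (vt s) (Pi.single q.1 (1:ℝ))) with hf'def
    have hgattach : g = fun s => ∑ q ∈ Q.attach, (vt s q.1) ^ 2 := by
      funext s
      rw [hgdef]
      exact (Finset.sum_attach Q fun q => (vt s q) ^ 2).symm
    have hgderiv : ∀ s ∈ Set.Icc (0:ℝ) b, HasDerivAt g (f' s) s := by
      intro s hs
      rw [hgattach, hf'def]
      apply HasDerivAt.fun_sum
      intro q hqa
      have h1 : HasDerivAt (fun s' => vt s' q.1)
          (- dObj D L R T (Wt s) q.1.1.1 (q.1.2.1 : ℕ) (q.1.2.2 : ℕ)) s :=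
        hflow q.1.1.1 q.1.2.1 (q.1.2.2 : ℕ) s hs.1
      have h2 := h1.fun_pow 2
      rw [dObj_eq' D L R T hT hL (Wt s) q.1] at h2
      rw [show wrest R T (Wt s) = vt s from rfl] at h2
      refine h2.congr_deriv ?_
      push_cast
      ring
    have hgb : ∀ s ∈ Set.Icc (0:ℝ) b, ‖f' s‖ ≤ (2 * Ksum) * ‖g s‖ + 0 := by
      intro s hs
      rw [Real.norm_eq_abs, Real.norm_eq_abs, abs_of_nonneg (hgnn s), add_zero]
      have hss : Real.sqrt (g s) * Real.sqrt (g s) = g s := Real.mul_self_sqrt (hgnn s)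
      calc |f' s| ≤ ∑ q ∈ Q.attach, |2 * vt s q.1 *
            (- fderiv ℝ (phiH D L R T) (vt s) (Pi.single q.1 (1:ℝ)))| := by
            rw [hf'def]; exact Finset.abs_sum_le_sum_abs _ _
        _ ≤ ∑ q ∈ Q.attach, 2 * Cq q * g s := by
            refine Finset.sum_le_sum fun q _ => ?_
            have b1 := hcoordsq s q.1 q.2
            have b2 := hCqb q s hs
            have b3 : |vt s q.1| * |fderiv ℝ (phiH D L R T) (vt s) (Pi.single q.1 (1:ℝ))|
                ≤ Real.sqrt (g s) * (Cq q * Real.sqrt (g s)) :=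
              mul_le_mul b1 b2 (abs_nonneg _) (Real.sqrt_nonneg _)
            calc |2 * vt s q.1 * (- fderiv ℝ (phiH D L R T) (vt s) (Pi.single q.1 (1:ℝ)))|
                = 2 * (|vt s q.1| *
                    |fderiv ℝ (phiH D L R T) (vt s) (Pi.single q.1 (1:ℝ))|) := by
                  rw [abs_mul, abs_mul, abs_neg, abs_two]; ring
              _ ≤ 2 * (Real.sqrt (g s) * (Cq q * Real.sqrt (g s))) := by linarith
              _ = 2 * Cq q * (Real.sqrt (g s) * Real.sqrt (g s)) := by ring
              _ = 2 * Cq q * g s := by rw [hss]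
        _ = (2 * Ksum) * g s := by
            have hsum : ∑ q ∈ Q.attach, 2 * Cq q * g s = Ksum * (2 * g s) := by
              rw [hKdef, Finset.sum_mul]
              exact Finset.sum_congr rfl fun q _ => by ring
            rw [hsum]; ring
    rcases le_total t₀ t with hle | hle
    · have hcont : ContinuousOn g (Set.Icc t₀ b) := fun z hz =>
        ((hgderiv z ⟨le_trans ht₀ hz.1, hz.2⟩).continuousAt).continuousWithinAt
      have happ := norm_le_gronwallBound_of_norm_deriv_right_le hcont
        (fun z hz => (hgderiv z ⟨le_trans ht₀ hz.1, le_of_lt hz.2⟩).hasDerivWithinAt)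
        (show ‖g t₀‖ ≤ (0:ℝ) by simp [hg0])
        (fun z hz => hgb z ⟨le_trans ht₀ hz.1, le_of_lt hz.2⟩)
      have h2 := happ t ⟨hle, le_max_left _ _⟩
      rw [gronwallBound_ε0] at h2
      have h3 : ‖g t‖ ≤ 0 := by simpa using h2
      rw [Real.norm_eq_abs, abs_of_nonneg (hgnn t)] at h3
      linarith [hgnn t]
    · set σ : ℝ → ℝ := fun u => t₀ + t - u with hσdef
      set F' : ℝ → ℝ := fun u => f' (σ u) * (-1) with hF'def
      have hσmem : ∀ u ∈ Set.Icc t t₀, σ u ∈ Set.Icc (0:ℝ) b := by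
        intro u hu
        have hb' : t₀ ≤ b := le_max_right _ _
        constructor
        · simp only [hσdef]; linarith [hu.2, ht]
        · simp only [hσdef]; linarith [hu.1]
      have hfd : ∀ u ∈ Set.Icc t t₀, HasDerivAt (fun w => g (σ w)) (F' u) u := by
        intro u hu
        have hσd : HasDerivAt σ (-1) u := by
          simpa [hσdef] using (hasDerivAt_id u).const_sub (t₀ + t)
        exact (hgderiv (σ u) (hσmem u hu)).comp u hσd
      have hcont2 : ContinuousOn (fun w => g (σ w)) (Set.Icc t t₀) := fun z hz =>
        ((hfd z hz).continuousAt).continuousWithinAt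
      have happ := norm_le_gronwallBound_of_norm_deriv_right_le hcont2
        (fun z hz => (hfd z ⟨hz.1, le_of_lt hz.2⟩).hasDerivWithinAt)
        (show ‖g (σ t)‖ ≤ (0:ℝ) by
          simp only [hσdef]
          rw [show t₀ + t - t = t₀ by ring, hg0, norm_zero])
        (fun z hz => by
          have hb2 := hgb (σ z) (hσmem z ⟨hz.1, le_of_lt hz.2⟩)
          calc ‖F' z‖ = ‖f' (σ z)‖ := by rw [hF'def]; simp [norm_mul]
            _ ≤ 2 * Ksum * ‖g (σ z)‖ + 0 := hb2)
      have h2 := happ t₀ ⟨hle, le_refl _⟩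
      rw [gronwallBound_ε0] at h2
      have h3 : ‖g (σ t₀)‖ ≤ 0 := by simpa using h2
      rw [show σ t₀ = t by simp only [hσdef]; ring] at h3
      rw [Real.norm_eq_abs, abs_of_nonneg (hgnn t)] at h3
      linarith [hgnn t]
  -- extract conclusions
  have hcoordzero : ∀ q ∈ Q, vt t q = 0 := by
    intro q hq
    have h1 := (Finset.sum_eq_zero_iff_of_nonneg (fun q' _ => sq_nonneg (vt t q'))).1 hgzero q hq
    exact pow_eq_zero_iff (by norm_num) |>.1 h1
  constructor
  · intro j hj
    have hq : (⟨⟨ν, hνf⟩, r, ⟨j, hj⟩⟩ : Iota R T) ∈ Q := hmemQ _ (Or.inl ⟨rfl, rfl⟩)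
    exact hcoordzero _ hq
  · intro c hc i
    have hcn : c ∈ T.nodes := mem_nodes_trans _ (mem_nodes_of_mem_children hc) hν
    have hrp : (r : ℕ) < Rpar R T c := by
      rw [Rpar_eq_of_mem_children R hT hν hc]; exact r.isLt
    have hq : (⟨⟨c, List.mem_toFinset.2 hcn⟩, i, ⟨(r : ℕ), hrp⟩⟩ : Iota R T) ∈ Q :=
      hmemQ _ (Or.inr ⟨hc, rfl⟩)
    exact hcoordzero _ hq
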